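/- Let q be a prime power and n a positive integer. A subset U ⊆ P_q(n) containing the zero subspace {0} and closed under subspace sum and intersection (i.e., a sublattice of the linear lattice P_q(n)) that is atomistic and distributive as a lattice, is a linear code closed under intersection; conversely, every linear code in P_q(n) that is closed under intersection is an atomistic distributive sublattice of P_q(n). -/
import Mathlib


open Module

/-- The subspace distance `d_S(X, Y) = dim(X + Y) - dim(X ∩ Y)`. -/
noncomputable def subspaceDist {F V : Type*} [Field F] [AddCommGroup V] [Module F V]
    (X Y : Submodule F V) : ℕ :=
  finrank F ↥(X ⊔ Y) - finrank F ↥(X ⊓ Y)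

/-- `U ⊆ P_q(n)` is a linear code: `{0} ∈ U` and there is an operation `⊞` on `U`
making it an abelian group with identity `{0}`, every element self-inverse, and the
subspace distance translation invariant. -/
def IsLinearCode {F V : Type*} [Field F] [AddCommGroup V] [Module F V]
    (U : Set (Submodule F V)) : Prop :=
  ∃ (h0 : ⊥ ∈ U) (op : U → U → U),
    (∀ X Y, op X Y = op Y X) ∧
    (∀ X Y Z, op (op X Y) Z = op X (op Y Z)) ∧
    (∀ X, op X ⟨⊥, h0⟩ = X) ∧
    (∀ X, op X X = ⟨⊥, h0⟩) ∧
    (∀ X Y W, subspaceDist (op X W : Submodule F V) (op Y W : Submodule F V) =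
      subspaceDist (X : Submodule F V) (Y : Submodule F V))

/- ### Auxiliary material -/

open scoped symmDiff

theorem symmDiff_cancel_aux {α : Type*} [GeneralizedBooleanAlgebra α] (a b c : α) :
    (a ∆ c) ∆ (b ∆ c) = a ∆ b := by
  rw [symmDiff_comm b c, ← symmDiff_assoc, symmDiff_assoc a, symmDiff_self, symmDiff_bot]

theorem distrib_chain_aux {α : Type*} [Lattice α] (A X Y : α)
    (h1 : (A ⊓ X) ⊔ (A ⊓ Y) = ((A ⊓ X) ⊔ A) ⊓ ((A ⊓ X) ⊔ Y))
    (h2 : Y ⊔ (A ⊓ X) = (Y ⊔ A) ⊓ (Y ⊔ X)) :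
    (A ⊓ X) ⊔ (A ⊓ Y) = A ⊓ (X ⊔ Y) := by
  rw [h1, sup_eq_right.2 inf_le_left, sup_comm (A ⊓ X) Y, h2, ← inf_assoc,
    inf_eq_left.2 (le_sup_right : A ≤ Y ⊔ A), sup_comm Y X]

section Aux

variable {F V : Type*} [Field F] [AddCommGroup V] [Module F V]

/-- An atom of the poset `U`. -/
def IsAtomOf (U : Set (Submodule F V)) (A : Submodule F V) : Prop :=
  A ∈ U ∧ ⊥ < A ∧ ∀ B ∈ U, ⊥ < B → ¬ B < A

theorem sup_mem_of_forall {U : Set (Submodule F V)} (h0 : ⊥ ∈ U)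
    (hsup : ∀ X ∈ U, ∀ Y ∈ U, X ⊔ Y ∈ U) (S : Finset (Submodule F V))
    (hS : ∀ A ∈ S, A ∈ U) : S.sup id ∈ U := by
  classical
  induction S using Finset.induction_on with
  | empty => simpa using h0
  | @insert B S hBS ih =>
    rw [Finset.sup_insert]
    exact hsup _ (hS _ (Finset.mem_insert_self _ _))
      _ (ih fun A hA => hS _ (Finset.mem_insert_of_mem hA))

theorem atom_inf_eq_bot_or_le {U : Set (Submodule F V)}
    (hinf : ∀ X ∈ U, ∀ Y ∈ U, X ⊓ Y ∈ U) {A B : Submodule F V}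
    (hA : IsAtomOf U A) (hB : B ∈ U) : A ⊓ B = ⊥ ∨ A ≤ B := by
  rcases eq_or_ne (A ⊓ B) ⊥ with h | h
  · exact Or.inl h
  · right
    have hmem : A ⊓ B ∈ U := hinf _ hA.1 _ hB
    have hlt : ¬ A ⊓ B < A := hA.2.2 _ hmem (bot_lt_iff_ne_bot.2 h)
    rcases (inf_le_left (a := A) (b := B)).lt_or_eq with h' | h'
    · exact absurd h' hlt
    · exact h' ▸ inf_le_right

theorem atom_prime {U : Set (Submodule F V)}
    (hinf : ∀ X ∈ U, ∀ Y ∈ U, X ⊓ Y ∈ U)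
    (hdistrib : ∀ X ∈ U, ∀ Y ∈ U, ∀ Z ∈ U, X ⊔ (Y ⊓ Z) = (X ⊔ Y) ⊓ (X ⊔ Z))
    {A X Y : Submodule F V} (hA : IsAtomOf U A) (hX : X ∈ U) (hY : Y ∈ U)
    (hle : A ≤ X ⊔ Y) : A ≤ X ∨ A ≤ Y := by
  rcases atom_inf_eq_bot_or_le hinf hA hX with h1 | h1
  · rcases atom_inf_eq_bot_or_le hinf hA hY with h2 | h2
    · exfalso
      have hAX : A ⊓ X ∈ U := hinf _ hA.1 _ hX
      have key : (A ⊓ X) ⊔ (A ⊓ Y) = A ⊓ (X ⊔ Y) :=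
        distrib_chain_aux A X Y (hdistrib _ hAX _ hA.1 _ hY) (hdistrib _ hY _ hA.1 _ hX)
      rw [h1, h2, inf_eq_left.2 hle] at key
      exact hA.2.1.ne' (by simpa using key.symm)
    · exact Or.inr h2
  · exact Or.inl h1

section FiniteStuff
variable [Fintype F] [FiniteDimensional F V]

theorem finite_submodule_aux : Finite (Submodule F V) := by
  have : Finite V := Module.finite_of_finite F
  exact Finite.of_injective (fun p => (p : Set V)) fun a b h => SetLike.ext' h

/-- The finset of atoms of `U` below `X`. -/
noncomputable def atomFinset (U : Set (Submodule F V)) (X : Submodule F V) :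
    Finset (Submodule F V) :=
  haveI : Finite (Submodule F V) := finite_submodule_aux
  (Set.toFinite {A | IsAtomOf U A ∧ A ≤ X}).toFinset

theorem mem_atomFinset {U : Set (Submodule F V)} {X A : Submodule F V} :
    A ∈ atomFinset U X ↔ IsAtomOf U A ∧ A ≤ X := by
  haveI : Finite (Submodule F V) := finite_submodule_aux
  simp [atomFinset, Set.Finite.mem_toFinset]

theorem atomFinset_bot (U : Set (Submodule F V)) : atomFinset U ⊥ = ∅ := by
  ext A
  simp only [mem_atomFinset, Finset.notMem_empty, iff_false, not_and]
  intro hA hle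
  exact absurd (le_bot_iff.1 hle) hA.2.1.ne'

theorem atom_mem_of_le_sup {U : Set (Submodule F V)} (h0 : ⊥ ∈ U)
    (hsup : ∀ X ∈ U, ∀ Y ∈ U, X ⊔ Y ∈ U)
    (hinf : ∀ X ∈ U, ∀ Y ∈ U, X ⊓ Y ∈ U)
    (hdistrib : ∀ X ∈ U, ∀ Y ∈ U, ∀ Z ∈ U, X ⊔ (Y ⊓ Z) = (X ⊔ Y) ⊓ (X ⊔ Z))
    {A : Submodule F V} (hA : IsAtomOf U A) :
    ∀ S : Finset (Submodule F V), (∀ B ∈ S, IsAtomOf U B) → A ≤ S.sup id → A ∈ S := by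
  classical
  intro S
  induction S using Finset.induction_on with
  | empty =>
    intro _ h
    exact absurd (le_bot_iff.1 (by simpa using h)) hA.2.1.ne'
  | @insert B S hBS ih =>
    intro hS h
    rw [Finset.sup_insert] at h
    have hBU : B ∈ U := (hS B (Finset.mem_insert_self _ _)).1
    have hSU : S.sup id ∈ U := sup_mem_of_forall h0 hsup S
      fun C hC => (hS C (Finset.mem_insert_of_mem hC)).1
    rcases atom_prime hinf hdistrib hA hBU hSU h with h' | h'
    · have hBatom := hS B (Finset.mem_insert_self _ _)
      rcases h'.lt_or_eq with hlt | heq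
      · exact absurd hlt (hBatom.2.2 _ hA.1 hA.2.1)
      · rw [heq]; exact Finset.mem_insert_self _ _
    · exact Finset.mem_insert_of_mem (ih (fun C hC => hS C (Finset.mem_insert_of_mem hC)) h')

theorem eq_atomFinset_sup {U : Set (Submodule F V)}
    (hatom : ∀ X ∈ U, ∃ S : Finset (Submodule F V),
      (∀ A ∈ S, A ∈ U ∧ ⊥ < A ∧ ∀ B ∈ U, ⊥ < B → ¬ B < A) ∧ X = S.sup id)
    {X : Submodule F V} (hX : X ∈ U) : X = (atomFinset U X).sup id := by
  obtain ⟨S, hS, hXS⟩ := hatom X hX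
  apply le_antisymm
  · rw [hXS]
    apply Finset.sup_mono
    intro A hA
    rw [mem_atomFinset]
    exact ⟨hS A hA, hXS ▸ Finset.le_sup (f := id) hA⟩
  · exact Finset.sup_le fun A hA => (mem_atomFinset.1 hA).2

theorem finrank_sup_atoms {U : Set (Submodule F V)} (h0 : ⊥ ∈ U)
    (hsup : ∀ X ∈ U, ∀ Y ∈ U, X ⊔ Y ∈ U)
    (hinf : ∀ X ∈ U, ∀ Y ∈ U, X ⊓ Y ∈ U)
    (hdistrib : ∀ X ∈ U, ∀ Y ∈ U, ∀ Z ∈ U, X ⊔ (Y ⊓ Z) = (X ⊔ Y) ⊓ (X ⊔ Z)) :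
    ∀ S : Finset (Submodule F V), (∀ B ∈ S, IsAtomOf U B) →
      finrank F ↥(S.sup id) = ∑ A ∈ S, finrank F ↥A := by
  classical
  intro S
  induction S using Finset.induction_on with
  | empty => simp
  | @insert B S hBS ih =>
    intro hS
    have hB := hS B (Finset.mem_insert_self _ _)
    have hS' : ∀ C ∈ S, IsAtomOf U C := fun C hC => hS C (Finset.mem_insert_of_mem hC)
    have hSU : S.sup id ∈ U := sup_mem_of_forall h0 hsup S fun C hC => (hS' C hC).1
    have hdisj : B ⊓ S.sup id = ⊥ := by
      rcases atom_inf_eq_bot_or_le hinf hB hSU with h | h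
      · exact h
      · exact absurd (atom_mem_of_le_sup h0 hsup hinf hdistrib hB S hS' h) hBS
    have hm := Submodule.finrank_sup_add_finrank_inf_eq B (S.sup id)
    rw [hdisj, finrank_bot] at hm
    rw [Finset.sup_insert, Finset.sum_insert hBS, ← ih hS']
    show finrank F ↥(B ⊔ S.sup id) = _
    omega

theorem atomFinset_sup_eq {U : Set (Submodule F V)} (h0 : ⊥ ∈ U)
    (hsup : ∀ X ∈ U, ∀ Y ∈ U, X ⊔ Y ∈ U)
    (hinf : ∀ X ∈ U, ∀ Y ∈ U, X ⊓ Y ∈ U)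
    (hdistrib : ∀ X ∈ U, ∀ Y ∈ U, ∀ Z ∈ U, X ⊔ (Y ⊓ Z) = (X ⊔ Y) ⊓ (X ⊔ Z))
    (S : Finset (Submodule F V)) (hS : ∀ B ∈ S, IsAtomOf U B) :
    atomFinset U (S.sup id) = S := by
  ext A
  rw [mem_atomFinset]
  constructor
  · rintro ⟨hA, hle⟩
    exact atom_mem_of_le_sup h0 hsup hinf hdistrib hA S hS hle
  · intro hA
    exact ⟨hS A hA, Finset.le_sup (f := id) hA⟩

theorem atomFinset_sup' [DecidableEq (Submodule F V)] {U : Set (Submodule F V)}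
    (hinf : ∀ X ∈ U, ∀ Y ∈ U, X ⊓ Y ∈ U)
    (hdistrib : ∀ X ∈ U, ∀ Y ∈ U, ∀ Z ∈ U, X ⊔ (Y ⊓ Z) = (X ⊔ Y) ⊓ (X ⊔ Z))
    {X Y : Submodule F V} (hX : X ∈ U) (hY : Y ∈ U) :
    atomFinset U (X ⊔ Y) = atomFinset U X ∪ atomFinset U Y := by
  ext A
  simp only [mem_atomFinset, Finset.mem_union]
  constructor
  · rintro ⟨hA, hle⟩
    rcases atom_prime hinf hdistrib hA hX hY hle with h | h
    · exact Or.inl ⟨hA, h⟩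
    · exact Or.inr ⟨hA, h⟩
  · rintro (⟨hA, h⟩ | ⟨hA, h⟩)
    · exact ⟨hA, h.trans le_sup_left⟩
    · exact ⟨hA, h.trans le_sup_right⟩

theorem atomFinset_inf [DecidableEq (Submodule F V)] {U : Set (Submodule F V)}
    (X Y : Submodule F V) :
    atomFinset U (X ⊓ Y) = atomFinset U X ∩ atomFinset U Y := by
  ext A
  simp only [mem_atomFinset, Finset.mem_inter, le_inf_iff]
  tauto

theorem subspaceDist_eq_sum [DecidableEq (Submodule F V)] {U : Set (Submodule F V)}
    (h0 : ⊥ ∈ U)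
    (hsup : ∀ X ∈ U, ∀ Y ∈ U, X ⊔ Y ∈ U)
    (hinf : ∀ X ∈ U, ∀ Y ∈ U, X ⊓ Y ∈ U)
    (hatom : ∀ X ∈ U, ∃ S : Finset (Submodule F V),
      (∀ A ∈ S, A ∈ U ∧ ⊥ < A ∧ ∀ B ∈ U, ⊥ < B → ¬ B < A) ∧ X = S.sup id)
    (hdistrib : ∀ X ∈ U, ∀ Y ∈ U, ∀ Z ∈ U, X ⊔ (Y ⊓ Z) = (X ⊔ Y) ⊓ (X ⊔ Z))
    {X Y : Submodule F V} (hX : X ∈ U) (hY : Y ∈ U) :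
    subspaceDist X Y = ∑ A ∈ atomFinset U X ∆ atomFinset U Y, finrank F ↥A := by
  have hXY : X ⊔ Y ∈ U := hsup _ hX _ hY
  have hXiY : X ⊓ Y ∈ U := hinf _ hX _ hY
  have hUat : ∀ A ∈ atomFinset U X ∪ atomFinset U Y, IsAtomOf U A := by
    intro A hA
    rcases Finset.mem_union.1 hA with h | h
    · exact (mem_atomFinset.1 h).1
    · exact (mem_atomFinset.1 h).1
  have hIat : ∀ A ∈ atomFinset U X ∩ atomFinset U Y, IsAtomOf U A := fun A hA =>
    (mem_atomFinset.1 (Finset.mem_of_mem_inter_left hA)).1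
  have e1 : finrank F ↥(X ⊔ Y) = ∑ A ∈ atomFinset U X ∪ atomFinset U Y, finrank F ↥A := by
    rw [eq_atomFinset_sup hatom hXY, atomFinset_sup' hinf hdistrib hX hY,
      finrank_sup_atoms h0 hsup hinf hdistrib _ hUat]
  have e2 : finrank F ↥(X ⊓ Y) = ∑ A ∈ atomFinset U X ∩ atomFinset U Y, finrank F ↥A := by
    rw [eq_atomFinset_sup hatom hXiY, atomFinset_inf,
      finrank_sup_atoms h0 hsup hinf hdistrib _ hIat]
  have hun : (atomFinset U X ∆ atomFinset U Y) ∪ (atomFinset U X ∩ atomFinset U Y) =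
      atomFinset U X ∪ atomFinset U Y := by
    rw [← Finset.sup_eq_union, ← Finset.inf_eq_inter, symmDiff_sup_inf,
      Finset.sup_eq_union]
  have hdisj : Disjoint (atomFinset U X ∆ atomFinset U Y)
      (atomFinset U X ∩ atomFinset U Y) := by
    rw [← Finset.inf_eq_inter]
    exact disjoint_symmDiff_inf _ _
  have e3 : (∑ A ∈ atomFinset U X ∪ atomFinset U Y, finrank F ↥A) =
      (∑ A ∈ atomFinset U X ∆ atomFinset U Y, finrank F ↥A) +
      (∑ A ∈ atomFinset U X ∩ atomFinset U Y, finrank F ↥A) := by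
    rw [← hun, Finset.sum_union hdisj]
  unfold subspaceDist
  omega
end FiniteStuff
end Aux

section Converse
variable {F V : Type*} [Field F] [AddCommGroup V] [Module F V]

structure LinCode (U : Set (Submodule F V)) where
  bot_mem : ⊥ ∈ U
  op : U → U → U
  comm : ∀ X Y, op X Y = op Y X
  assoc : ∀ X Y Z, op (op X Y) Z = op X (op Y Z)
  op_bot : ∀ X, op X ⟨⊥, bot_mem⟩ = X
  op_self : ∀ X, op X X = ⟨⊥, bot_mem⟩
  dist : ∀ X Y W, subspaceDist (op X W : Submodule F V) (op Y W : Submodule F V) =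
    subspaceDist (X : Submodule F V) (Y : Submodule F V)
  inter : ∀ X ∈ U, ∀ Y ∈ U, X ⊓ Y ∈ U

namespace LinCode
variable {U : Set (Submodule F V)} (L : LinCode U)

theorem cancel {X Y Z : U} (h : L.op X Z = L.op Y Z) : X = Y := by
  calc X = L.op X ⟨⊥, L.bot_mem⟩ := (L.op_bot X).symm
    _ = L.op X (L.op Z Z) := by rw [L.op_self]
    _ = L.op (L.op X Z) Z := (L.assoc ..).symm
    _ = L.op (L.op Y Z) Z := by rw [h]
    _ = L.op Y (L.op Z Z) := L.assoc ..
    _ = Y := by rw [L.op_self, L.op_bot]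

variable [FiniteDimensional F V]

theorem dim_op (X Y : U) :
    finrank F ↥(L.op X Y : Submodule F V) +
      2 * finrank F ↥((X : Submodule F V) ⊓ (Y : Submodule F V)) =
    finrank F ↥(X : Submodule F V) + finrank F ↥(Y : Submodule F V) := by
  have h := L.dist X Y Y
  rw [L.op_self] at h
  have hcoe : ((⟨⊥, L.bot_mem⟩ : U) : Submodule F V) = ⊥ := rfl
  rw [hcoe] at h
  unfold subspaceDist at h
  rw [sup_bot_eq, inf_bot_eq, finrank_bot, Nat.sub_zero] at h
  have hm := Submodule.finrank_sup_add_finrank_inf_eq (X : Submodule F V) (Y : Submodule F V)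
  have hle : finrank F ↥((X : Submodule F V) ⊓ (Y : Submodule F V)) ≤
      finrank F ↥((X : Submodule F V) ⊔ (Y : Submodule F V)) :=
    Submodule.finrank_mono (le_trans inf_le_left le_sup_left)
  omega

theorem op_op_cancel (X Y : U) : L.op X (L.op X Y) = Y := by
  rw [← L.assoc, L.op_self, L.comm, L.op_bot]

/-- complement lemma: if `D ≤ X` then `X ⊞ D` is a complement of `D` in `X`. -/
theorem compl_dim {X D : U} (hD : (D : Submodule F V) ≤ (X : Submodule F V)) :
    finrank F ↥(L.op X D : Submodule F V) + finrank F ↥(D : Submodule F V) =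
      finrank F ↥(X : Submodule F V) := by
  have h := L.dim_op X D
  rw [inf_eq_right.2 hD] at h
  omega

theorem compl_le {X D : U} (hD : (D : Submodule F V) ≤ (X : Submodule F V)) :
    (L.op X D : Submodule F V) ≤ (X : Submodule F V) := by
  have hXX : L.op (L.op X D) X = D := by
    rw [L.comm X D, L.assoc, L.op_self, L.op_bot]
  have h := L.dim_op (L.op X D) X
  rw [hXX] at h
  have hd := L.compl_dim hD
  have key : finrank F ↥((L.op X D : Submodule F V) ⊓ (X : Submodule F V)) =
      finrank F ↥(L.op X D : Submodule F V) := by omega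
  have : (L.op X D : Submodule F V) ⊓ (X : Submodule F V) = (L.op X D : Submodule F V) :=
    Submodule.eq_of_le_of_finrank_le inf_le_left (by omega)
  exact inf_eq_left.1 this

theorem compl_inf {X D : U} (hD : (D : Submodule F V) ≤ (X : Submodule F V)) :
    (L.op X D : Submodule F V) ⊓ (D : Submodule F V) = ⊥ := by
  have hXD : L.op (L.op X D) D = X := by rw [L.assoc, L.op_self, L.op_bot]
  have h := L.dim_op (L.op X D) D
  rw [hXD] at h
  have hd := L.compl_dim hD
  have : finrank F ↥((L.op X D : Submodule F V) ⊓ (D : Submodule F V)) = 0 := by omega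
  exact Submodule.finrank_eq_zero.1 this

theorem compl_sup {X D : U} (hD : (D : Submodule F V) ≤ (X : Submodule F V)) :
    (L.op X D : Submodule F V) ⊔ (D : Submodule F V) = (X : Submodule F V) := by
  have hle : (L.op X D : Submodule F V) ⊔ (D : Submodule F V) ≤ (X : Submodule F V) :=
    sup_le (L.compl_le hD) hD
  have hm := Submodule.finrank_sup_add_finrank_inf_eq (L.op X D : Submodule F V)
    (D : Submodule F V)
  rw [L.compl_inf hD, finrank_bot] at hm
  have hd := L.compl_dim hD
  exact Submodule.eq_of_le_of_finrank_le hle (by omega)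


theorem disjoint_op {X Y : U} (h : (X : Submodule F V) ⊓ (Y : Submodule F V) = ⊥) :
    (L.op X Y : Submodule F V) = (X : Submodule F V) ⊔ (Y : Submodule F V) := by
  have hd := L.dim_op X Y
  rw [h, finrank_bot] at hd
  have hXle : (X : Submodule F V) ≤ (L.op X Y : Submodule F V) := by
    have hc : L.op (L.op X Y) X = Y := by
      rw [L.comm X Y, L.assoc, L.op_self, L.op_bot]
    have h2 := L.dim_op (L.op X Y) X
    rw [hc] at h2
    have : (L.op X Y : Submodule F V) ⊓ (X : Submodule F V) = (X : Submodule F V) :=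
      Submodule.eq_of_le_of_finrank_le inf_le_right (by omega)
    exact inf_eq_right.1 this
  have hYle : (Y : Submodule F V) ≤ (L.op X Y : Submodule F V) := by
    have hc : L.op (L.op X Y) Y = X := by rw [L.assoc, L.op_self, L.op_bot]
    have h2 := L.dim_op (L.op X Y) Y
    rw [hc] at h2
    have : (L.op X Y : Submodule F V) ⊓ (Y : Submodule F V) = (Y : Submodule F V) :=
      Submodule.eq_of_le_of_finrank_le inf_le_right (by omega)
    exact inf_eq_right.1 this
  have hm := Submodule.finrank_sup_add_finrank_inf_eq (X : Submodule F V) (Y : Submodule F V)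
  rw [h, finrank_bot] at hm
  exact (Submodule.eq_of_le_of_finrank_le (sup_le hXle hYle) (by omega)).symm

/-- closure under sum: `X ⊔ Y = (X ⊞ D) ⊞ Y` with `D = X ⊓ Y`. -/
theorem sup_eq_op {X Y : U} :
    (L.op (L.op X ⟨(X : Submodule F V) ⊓ (Y : Submodule F V), L.inter _ X.2 _ Y.2⟩) Y :
      Submodule F V) = (X : Submodule F V) ⊔ (Y : Submodule F V) := by
  set D : U := ⟨(X : Submodule F V) ⊓ (Y : Submodule F V), L.inter _ X.2 _ Y.2⟩ with hDdef
  have hD : (D : Submodule F V) ≤ (X : Submodule F V) := inf_le_left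
  set X' := L.op X D with hX'def
  have hX'X : (X' : Submodule F V) ≤ X := L.compl_le hD
  have hX'D : (X' : Submodule F V) ⊓ (D : Submodule F V) = ⊥ := L.compl_inf hD
  have hX'Y : (X' : Submodule F V) ⊓ (Y : Submodule F V) = ⊥ := by
    apply le_bot_iff.1
    rw [← hX'D]
    exact le_inf inf_le_left (le_inf (inf_le_left.trans hX'X) inf_le_right)
  rw [L.disjoint_op hX'Y]
  apply le_antisymm
  · exact sup_le (hX'X.trans le_sup_left) le_sup_right
  · have hXle : (X : Submodule F V) ≤ (X' : Submodule F V) ⊔ (Y : Submodule F V) := by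
      rw [← L.compl_sup hD]
      exact sup_le le_sup_left ((inf_le_right (a := (X:Submodule F V))).trans le_sup_right)
    exact sup_le hXle le_sup_right

include L in
theorem sup_mem (X Y : U) : (X : Submodule F V) ⊔ (Y : Submodule F V) ∈ U := by
  rw [← L.sup_eq_op]
  exact (L.op _ Y).2



include L in
theorem prime {A : Submodule F V} (hA : IsAtomOf U A) :
    ∀ (X Y : U), A ≤ (X : Submodule F V) ⊔ (Y : Submodule F V) →
      A ≤ (X : Submodule F V) ∨ A ≤ (Y : Submodule F V) := by
  suffices h : ∀ k (X Y : U),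
      finrank F ↥(X : Submodule F V) + finrank F ↥(Y : Submodule F V) ≤ k →
      A ≤ (X : Submodule F V) ⊔ (Y : Submodule F V) →
      A ≤ (X : Submodule F V) ∨ A ≤ (Y : Submodule F V) by
    intro X Y h'
    exact h _ X Y le_rfl h'
  intro k
  induction k with
  | zero =>
    intro X Y hk hle
    have hX : (X : Submodule F V) = ⊥ := Submodule.finrank_eq_zero.1 (by omega)
    rw [hX, bot_sup_eq] at hle
    exact Or.inr hle
  | succ k IH =>
    intro X Y hk hle
    by_cases hAX : A ≤ (X : Submodule F V)
    · exact Or.inl hAX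
    by_cases hAY : A ≤ (Y : Submodule F V)
    · exact Or.inr hAY
    exfalso
    have hAXbot : A ⊓ (X : Submodule F V) = ⊥ :=
      (atom_inf_eq_bot_or_le L.inter hA X.2).resolve_right hAX
    have hAYbot : A ⊓ (Y : Submodule F V) = ⊥ :=
      (atom_inf_eq_bot_or_le L.inter hA Y.2).resolve_right hAY
    rcases eq_or_ne ((X : Submodule F V) ⊓ (Y : Submodule F V)) ⊥ with hD | hD
    · -- X ⊓ Y = ⊥ : the crux
      set AU : U := ⟨A, hA.1⟩ with hAUdef
      have key : ∀ X' Y' : U, ((X' : Submodule F V) ⊓ (Y' : Submodule F V)) = ⊥ →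
          A ⊓ (X' : Submodule F V) = ⊥ → A ⊓ (Y' : Submodule F V) = ⊥ →
          A ≤ (X' : Submodule F V) ⊔ (Y' : Submodule F V) →
          finrank F ↥(X' : Submodule F V) + finrank F ↥(Y' : Submodule F V) ≤ k + 1 →
          (Y' : Submodule F V) ≤ A ⊔ (X' : Submodule F V) := by
        intro X' Y' hXY' hAX' hAY' hle' hk'
        have hopAX : (L.op AU X' : Submodule F V) = A ⊔ (X' : Submodule F V) :=
          L.disjoint_op hAX'
        have hopXY : (L.op X' Y' : Submodule F V) = (X' : Submodule F V) ⊔ (Y' : Submodule F V) :=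
          L.disjoint_op hXY'
        have hApos : 0 < finrank F ↥A := by
          rcases Nat.eq_zero_or_pos (finrank F ↥A) with h | h
          · exact absurd (Submodule.finrank_eq_zero.1 h) hA.2.1.ne'
          · exact h
        have hm1 := Submodule.finrank_sup_add_finrank_inf_eq A (X' : Submodule F V)
        rw [hAX', finrank_bot] at hm1
        have hm2 := Submodule.finrank_sup_add_finrank_inf_eq (X' : Submodule F V)
          (Y' : Submodule F V)
        rw [hXY', finrank_bot] at hm2
        have hC : finrank F ↥((A ⊔ (X' : Submodule F V)) ⊓ (Y' : Submodule F V)) =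
            finrank F ↥A := by
          have h1 := L.dim_op (L.op AU X') Y'
          rw [hopAX] at h1
          have hAleW : (AU : Submodule F V) ≤ (L.op X' Y' : Submodule F V) := by
            rw [hopXY]; exact hle'
          have h2 := L.compl_dim hAleW
          have h3 : L.op (L.op AU X') Y' = L.op (L.op X' Y') AU := by
            rw [L.assoc, L.comm]
          rw [h3] at h1
          rw [hopXY] at h2
          have hAcoe : (AU : Submodule F V) = A := rfl
          rw [hAcoe] at h2
          omega
        by_cases hCY : finrank F ↥((A ⊔ (X' : Submodule F V)) ⊓ (Y' : Submodule F V)) =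
            finrank F ↥(Y' : Submodule F V)
        · have : (A ⊔ (X' : Submodule F V)) ⊓ (Y' : Submodule F V) = (Y' : Submodule F V) :=
            Submodule.eq_of_le_of_finrank_le inf_le_right (le_of_eq hCY.symm)
          rw [← this]
          exact inf_le_left
        · exfalso
          have hClt : finrank F ↥((A ⊔ (X' : Submodule F V)) ⊓ (Y' : Submodule F V)) <
              finrank F ↥(Y' : Submodule F V) :=
            lt_of_le_of_ne (Submodule.finrank_mono inf_le_right) hCY
          have hCmem : (A ⊔ (X' : Submodule F V)) ⊓ (Y' : Submodule F V) ∈ U :=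
            L.inter _ (hopAX ▸ (L.op AU X').2) _ Y'.2
          set CU : U := ⟨(A ⊔ (X' : Submodule F V)) ⊓ (Y' : Submodule F V), hCmem⟩ with hCUdef
          have hCcoe : (CU : Submodule F V) = (A ⊔ (X' : Submodule F V)) ⊓ (Y' : Submodule F V) :=
            rfl
          have hX'C : (X' : Submodule F V) ⊓ (CU : Submodule F V) = ⊥ := by
            apply le_bot_iff.1
            calc (X' : Submodule F V) ⊓ (CU : Submodule F V) ≤
                (X' : Submodule F V) ⊓ (Y' : Submodule F V) :=
                  inf_le_inf_left _ (hCcoe ▸ inf_le_right)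
              _ = ⊥ := hXY'
          have hXC : (X' : Submodule F V) ⊔ (CU : Submodule F V) = A ⊔ (X' : Submodule F V) := by
            apply Submodule.eq_of_le_of_finrank_le
            · exact sup_le le_sup_right (hCcoe ▸ inf_le_left)
            · have hmc := Submodule.finrank_sup_add_finrank_inf_eq (X' : Submodule F V)
                (CU : Submodule F V)
              rw [hX'C, finrank_bot] at hmc
              have : finrank F ↥(CU : Submodule F V) = finrank F ↥A := hC
              omega
          have hAle' : A ≤ (X' : Submodule F V) ⊔ (CU : Submodule F V) := by
            rw [hXC]; exact le_sup_left
          have hCg : finrank F ↥(CU : Submodule F V) =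
              finrank F ↥((A ⊔ (X' : Submodule F V)) ⊓ (Y' : Submodule F V)) := rfl
          rcases IH X' CU (by omega) hAle' with h | h
          · have : A = ⊥ := by rw [← hAX']; exact (inf_eq_left.2 h).symm
            exact hA.2.1.ne' this
          · have hACbot : A ⊓ (CU : Submodule F V) = ⊥ := by
              apply le_bot_iff.1
              calc A ⊓ (CU : Submodule F V) ≤ A ⊓ (Y' : Submodule F V) :=
                  inf_le_inf_left _ (hCcoe ▸ inf_le_right)
                _ = ⊥ := hAY'
            have : A = ⊥ := by rw [← hACbot]; exact (inf_eq_left.2 h).symm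
            exact hA.2.1.ne' this
      have h1 := key X Y hD hAXbot hAYbot hle hk
      have h2 := key Y X (by rw [inf_comm]; exact hD) hAYbot hAXbot (by rwa [sup_comm]) (by omega)
      have e1 : (L.op AU X : Submodule F V) = A ⊔ (X : Submodule F V) := L.disjoint_op hAXbot
      have e2 : (L.op AU Y : Submodule F V) = A ⊔ (Y : Submodule F V) := L.disjoint_op hAYbot
      have heq : A ⊔ (X : Submodule F V) = A ⊔ (Y : Submodule F V) := by
        apply le_antisymm
        · exact sup_le le_sup_left h2
        · exact sup_le le_sup_left h1
      have hop : L.op AU X = L.op AU Y := Subtype.ext (by rw [e1, e2, heq])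
      have hXYeq : X = Y := L.cancel (Z := AU) (by rw [L.comm, hop, L.comm])
      have hXbot : (X : Submodule F V) = ⊥ := by
        rw [← hD, hXYeq]
        exact le_antisymm (le_inf le_rfl le_rfl) inf_le_left
      rw [hXbot, bot_sup_eq] at hle
      exact hAY hle
    · -- X ⊓ Y ≠ ⊥ : shrink Y
      set D : U := ⟨(X : Submodule F V) ⊓ (Y : Submodule F V), L.inter _ X.2 _ Y.2⟩ with hDdef
      have hDY : (D : Submodule F V) ≤ (Y : Submodule F V) := inf_le_right
      have hDX : (D : Submodule F V) ≤ (X : Submodule F V) := inf_le_left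
      have h1 := L.compl_dim hDY
      have hDpos : 0 < finrank F ↥(D : Submodule F V) :=
        Nat.pos_of_ne_zero fun h => hD (Submodule.finrank_eq_zero.1 h)
      have hsup : (X : Submodule F V) ⊔ (L.op Y D : Submodule F V) =
          (X : Submodule F V) ⊔ (Y : Submodule F V) := by
        apply le_antisymm
        · exact sup_le le_sup_left ((L.compl_le hDY).trans le_sup_right)
        · refine sup_le le_sup_left ?_
          calc (Y : Submodule F V) = (L.op Y D : Submodule F V) ⊔ (D : Submodule F V) :=
              (L.compl_sup hDY).symm
            _ ≤ (X : Submodule F V) ⊔ (L.op Y D : Submodule F V) :=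
              sup_le le_sup_right (hDX.trans le_sup_left)
      rcases IH X (L.op Y D) (by omega) (by rw [hsup]; exact hle) with h | h
      · exact hAX h
      · exact hAY (h.trans (L.compl_le hDY))


omit L in
theorem exists_atom_le' : ∀ k (X : U), finrank F ↥(X : Submodule F V) ≤ k →
    ⊥ < (X : Submodule F V) → ∃ A, IsAtomOf U A ∧ A ≤ (X : Submodule F V) := by
  intro k
  induction k with
  | zero =>
    intro X hk hlt
    exact absurd (Submodule.finrank_eq_zero.1 (by omega)) hlt.ne'
  | succ k IH =>
    intro X hk hlt
    by_cases hmin : ∀ B ∈ U, ⊥ < B → ¬ B < (X : Submodule F V)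
    · exact ⟨X, ⟨X.2, hlt, hmin⟩, le_rfl⟩
    · push_neg at hmin
      obtain ⟨B, hBU, hBlt, hBX⟩ := hmin
      have hlt' : finrank F ↥B < finrank F ↥(X : Submodule F V) :=
        Submodule.finrank_lt_finrank_of_lt hBX
      obtain ⟨A, hA, hAB⟩ := IH ⟨B, hBU⟩ (show finrank F ↥B ≤ k by omega) hBlt
      exact ⟨A, hA, hAB.trans hBX.le⟩

include L in
theorem atomistic : ∀ k (X : U), finrank F ↥(X : Submodule F V) ≤ k →
    ∃ S : Finset (Submodule F V), (∀ A ∈ S, IsAtomOf U A) ∧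
      (X : Submodule F V) = S.sup id := by
  classical
  intro k
  induction k with
  | zero =>
    intro X hk
    exact ⟨∅, by simp, by simpa using Submodule.finrank_eq_zero.1 (by omega)⟩
  | succ k IH =>
    intro X hk
    rcases eq_or_ne (X : Submodule F V) ⊥ with hX | hX
    · exact ⟨∅, by simp, by simpa using hX⟩
    · obtain ⟨A, hA, hAX⟩ := exists_atom_le' (U := U) (k + 1) X hk (bot_lt_iff_ne_bot.2 hX)
      set AU : U := ⟨A, hA.1⟩ with hAUdef
      have h1 := L.compl_dim (X := X) (D := AU) hAX
      have hApos : 0 < finrank F ↥A :=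
        Nat.pos_of_ne_zero fun h => hA.2.1.ne' (Submodule.finrank_eq_zero.1 h)
      have hAcoe : (AU : Submodule F V) = A := rfl
      rw [hAcoe] at h1
      obtain ⟨S, hS, hsup⟩ := IH (L.op X AU) (by omega)
      refine ⟨insert A S, ?_, ?_⟩
      · intro B hB
        rcases Finset.mem_insert.1 hB with h | h
        · exact h ▸ hA
        · exact hS B h
      · rw [Finset.sup_insert, ← hsup, id_eq, sup_comm]
        exact (L.compl_sup hAX).symm

include L in
theorem distrib (X Y Z : U) :
    (X : Submodule F V) ⊔ ((Y : Submodule F V) ⊓ (Z : Submodule F V)) =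
      ((X : Submodule F V) ⊔ (Y : Submodule F V)) ⊓
        ((X : Submodule F V) ⊔ (Z : Submodule F V)) := by
  apply le_antisymm
  · exact le_inf (sup_le_sup_left inf_le_left _) (sup_le_sup_left inf_le_right _)
  · have hR : ((X : Submodule F V) ⊔ (Y : Submodule F V)) ⊓
        ((X : Submodule F V) ⊔ (Z : Submodule F V)) ∈ U :=
      L.inter _ (L.sup_mem X Y) _ (L.sup_mem X Z)
    obtain ⟨S, hS, hsup⟩ := L.atomistic (finrank F ↥(((X : Submodule F V) ⊔ (Y : Submodule F V)) ⊓
        ((X : Submodule F V) ⊔ (Z : Submodule F V)))) ⟨_, hR⟩ le_rfl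
    have hsup' : ((X : Submodule F V) ⊔ (Y : Submodule F V)) ⊓
        ((X : Submodule F V) ⊔ (Z : Submodule F V)) = S.sup id := hsup
    rw [hsup']
    apply Finset.sup_le
    intro A hAS
    have hA := hS A hAS
    have hAR : A ≤ ((X : Submodule F V) ⊔ (Y : Submodule F V)) ⊓
        ((X : Submodule F V) ⊔ (Z : Submodule F V)) := by
      rw [hsup']; exact Finset.le_sup (f := id) hAS
    rcases L.prime hA X Y (hAR.trans inf_le_left) with h | h
    · exact le_trans h le_sup_left
    · rcases L.prime hA X Z (hAR.trans inf_le_right) with h' | h'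
      · exact le_trans h' le_sup_left
      · exact le_trans (le_inf h h') le_sup_right

end LinCode
end Converse

/-- A subset `U` of `P_q(n)` containing `{0}`, closed under subspace sum
and intersection, which as a lattice is atomistic and distributive, is exactly the same
thing as a linear code closed under intersection. -/
theorem distrib_sublattice_iff_linear_code_closed_inter
    (q n : ℕ) (hq : IsPrimePow q) (hn : 0 < n)
    (F V : Type*) [Field F] [Fintype F] (hF : Fintype.card F = q)
    [AddCommGroup V] [Module F V] [FiniteDimensional F V] (hV : finrank F V = n)
    (U : Set (Submodule F V)) :
    (⊥ ∈ U ∧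
      (∀ X ∈ U, ∀ Y ∈ U, X ⊔ Y ∈ U) ∧
      (∀ X ∈ U, ∀ Y ∈ U, X ⊓ Y ∈ U) ∧
      (∀ X ∈ U, ∃ S : Finset (Submodule F V),
        (∀ A ∈ S, A ∈ U ∧ ⊥ < A ∧ ∀ B ∈ U, ⊥ < B → ¬ B < A) ∧ X = S.sup id) ∧
      (∀ X ∈ U, ∀ Y ∈ U, ∀ Z ∈ U, X ⊔ (Y ⊓ Z) = (X ⊔ Y) ⊓ (X ⊔ Z)))
    ↔ (IsLinearCode U ∧ ∀ X ∈ U, ∀ Y ∈ U, X ⊓ Y ∈ U) := by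
  classical
  constructor
  · rintro ⟨h0, hsup, hinf, hatom, hdistrib⟩
    refine ⟨?_, hinf⟩
    have hmemop : ∀ X Y : U, ∀ A ∈ atomFinset U ↑X ∆ atomFinset U ↑Y, IsAtomOf U A := by
      intro X Y A hA
      rcases Finset.mem_symmDiff.1 hA with ⟨h, _⟩ | ⟨h, _⟩
      · exact (mem_atomFinset.1 h).1
      · exact (mem_atomFinset.1 h).1
    refine ⟨h0, fun X Y => ⟨(atomFinset U ↑X ∆ atomFinset U ↑Y).sup id,
      sup_mem_of_forall h0 hsup _ fun A hA => (hmemop X Y A hA).1⟩, ?_, ?_, ?_, ?_, ?_⟩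
    · -- commutativity
      intro X Y
      apply Subtype.ext
      show ((atomFinset U ↑X ∆ atomFinset U ↑Y).sup id : Submodule F V) =
        (atomFinset U ↑Y ∆ atomFinset U ↑X).sup id
      rw [symmDiff_comm]
    · -- associativity
      intro X Y Z
      apply Subtype.ext
      show ((atomFinset U ((atomFinset U ↑X ∆ atomFinset U ↑Y).sup id) ∆
          atomFinset U ↑Z).sup id : Submodule F V) =
        (atomFinset U ↑X ∆ atomFinset U ((atomFinset U ↑Y ∆ atomFinset U ↑Z).sup id)).sup id
      rw [atomFinset_sup_eq h0 hsup hinf hdistrib _ (hmemop X Y),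
        atomFinset_sup_eq h0 hsup hinf hdistrib _ (hmemop Y Z), symmDiff_assoc]
    · -- identity
      intro X
      apply Subtype.ext
      show ((atomFinset U ↑X ∆ atomFinset U (⊥ : Submodule F V)).sup id : Submodule F V) = ↑X
      rw [atomFinset_bot, ← Finset.bot_eq_empty, symmDiff_bot]
      exact (eq_atomFinset_sup hatom X.2).symm
    · -- self-inverse
      intro X
      apply Subtype.ext
      show ((atomFinset U ↑X ∆ atomFinset U ↑X).sup id : Submodule F V) = ⊥
      rw [symmDiff_self, Finset.bot_eq_empty, Finset.sup_empty]
    · -- distance invariance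
      intro X Y W
      show subspaceDist ((atomFinset U ↑X ∆ atomFinset U ↑W).sup id)
          ((atomFinset U ↑Y ∆ atomFinset U ↑W).sup id) =
        subspaceDist (X : Submodule F V) (Y : Submodule F V)
      rw [subspaceDist_eq_sum h0 hsup hinf hatom hdistrib
          (sup_mem_of_forall h0 hsup _ fun A hA => (hmemop X W A hA).1)
          (sup_mem_of_forall h0 hsup _ fun A hA => (hmemop Y W A hA).1),
        subspaceDist_eq_sum h0 hsup hinf hatom hdistrib X.2 Y.2,
        atomFinset_sup_eq h0 hsup hinf hdistrib _ (hmemop X W),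
        atomFinset_sup_eq h0 hsup hinf hdistrib _ (hmemop Y W),
        symmDiff_cancel_aux]
  · rintro ⟨⟨h0, op, hcomm, hassoc, hopbot, hopself, hdist⟩, hinf⟩
    let L : LinCode U := ⟨h0, op, hcomm, hassoc, hopbot, hopself, hdist, hinf⟩
    refine ⟨h0, fun X hX Y hY => L.sup_mem ⟨X, hX⟩ ⟨Y, hY⟩, hinf, ?_, ?_⟩
    · intro X hX
      obtain ⟨S, hS, hsup⟩ := L.atomistic (finrank F ↥X) ⟨X, hX⟩ le_rfl
      exact ⟨S, fun A hA => hS A hA, hsup⟩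
    · intro X hX Y hY Z hZ
      exact L.distrib ⟨X, hX⟩ ⟨Y, hY⟩ ⟨Z, hZ⟩
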